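/- Let d ≥ 1, 0 < α ≤ 1, and 0 < η < 4α/(d + 2α). There exists a constant C (depending only on d, α, η) such that for every measurable u : ℝ^d → ℂ with u ∈ L²(ℝ^d) and x ↦ |x|^α u(x) ∈ L²(ℝ^d), one has ∫_{ℝ^d} |u(x)|^{2−η} dx ≤ C · ‖u‖_{L²}^{2−η−dη/(2α)} · ‖|x|^α u‖_{L²}^{dη/(2α)}. -/

import Mathlib

open MeasureTheory Metric Set ENNReal

lemma pow_identity (d : ℕ) (s r : ℝ) (hr : 0 < r) (k : ℕ) :
    ((2:ℝ) ^ (k:ℝ) * r) ^ (-s) * ((2:ℝ) ^ ((k:ℝ)+1) * r) ^ (d:ℝ) =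
    ((2:ℝ) ^ (d:ℝ) * r ^ ((d:ℝ) - s)) * ((2:ℝ) ^ ((d:ℝ) - s)) ^ (k:ℝ) := by
  rw [Real.mul_rpow (by positivity) hr.le, Real.mul_rpow (by positivity) hr.le,
    ← Real.rpow_mul two_pos.le, ← Real.rpow_mul two_pos.le, ← Real.rpow_mul two_pos.le]
  calc (2:ℝ) ^ ((k:ℝ) * -s) * r ^ (-s) * ((2:ℝ) ^ (((k:ℝ) + 1) * (d:ℝ)) * r ^ (d:ℝ))
      = (2:ℝ) ^ ((k:ℝ) * -s + ((k:ℝ) + 1) * (d:ℝ)) * r ^ (-s + (d:ℝ)) := by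
        rw [Real.rpow_add two_pos, Real.rpow_add hr]; ring
    _ = (2:ℝ) ^ ((d:ℝ) + ((d:ℝ) - s) * (k:ℝ)) * r ^ ((d:ℝ) - s) := by
        rw [show (k:ℝ) * -s + ((k:ℝ) + 1) * (d:ℝ) = (d:ℝ) + ((d:ℝ) - s) * (k:ℝ) from by ring,
          show -s + (d:ℝ) = (d:ℝ) - s from by ring]
    _ = (2:ℝ) ^ (d:ℝ) * r ^ ((d:ℝ) - s) * (2:ℝ) ^ (((d:ℝ) - s) * (k:ℝ)) := by
        rw [Real.rpow_add two_pos]; ring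

lemma tail_bound (d : ℕ) (hd : 1 ≤ d) (s : ℝ) (hs : (d : ℝ) < s) (r : ℝ) (hr : 0 < r) :
    ∫⁻ x in {x : EuclideanSpace ℝ (Fin d) | r < ‖x‖}, ENNReal.ofReal (‖x‖ ^ (-s)) ∂volume
      ≤ (ENNReal.ofReal ((2:ℝ) ^ (d:ℝ)) * volume (ball (0 : EuclideanSpace ℝ (Fin d)) 1)
          * (1 - ENNReal.ofReal ((2:ℝ) ^ ((d:ℝ) - s)))⁻¹) * ENNReal.ofReal (r ^ ((d:ℝ) - s)) := by
  haveI : Nonempty (Fin d) := ⟨⟨0, hd⟩⟩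
  haveI : Nontrivial (EuclideanSpace ℝ (Fin d)) := inferInstance
  set E := EuclideanSpace ℝ (Fin d)
  set A : ℕ → Set E := fun k => {x : E | (2:ℝ) ^ (k:ℝ) * r ≤ ‖x‖ ∧ ‖x‖ < (2:ℝ) ^ ((k:ℝ)+1) * r}
    with hA
  have hsub : {x : E | r < ‖x‖} ⊆ ⋃ k, A k := by
    intro x hx
    have hx : r < ‖x‖ := hx
    have hxpos : 0 < ‖x‖ := hr.trans hx
    have ht1 : 1 < ‖x‖ / r := (one_lt_div hr).2 hx
    have hlog : 0 ≤ Real.logb 2 (‖x‖ / r) := Real.logb_nonneg one_lt_two ht1.le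
    set k := ⌊Real.logb 2 (‖x‖ / r)⌋₊
    refine mem_iUnion.2 ⟨k, ?_, ?_⟩
    · have h1 : (k:ℝ) ≤ Real.logb 2 (‖x‖ / r) := Nat.floor_le hlog
      have := Real.rpow_le_rpow_of_exponent_le one_le_two h1
      rw [Real.rpow_logb two_pos (by norm_num) (by positivity)] at this
      calc (2:ℝ) ^ (k:ℝ) * r ≤ (‖x‖ / r) * r := by nlinarith
        _ = ‖x‖ := by field_simp
    · have h2 : Real.logb 2 (‖x‖ / r) < (k:ℝ) + 1 := Nat.lt_floor_add_one _
      have := Real.rpow_lt_rpow_of_exponent_lt one_lt_two h2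
      rw [Real.rpow_logb two_pos (by norm_num) (by positivity)] at this
      calc ‖x‖ = (‖x‖ / r) * r := by field_simp
        _ < (2:ℝ) ^ ((k:ℝ)+1) * r := by nlinarith
  have hmeas : ∀ k, MeasurableSet (A k) := fun k =>
    (measurableSet_le measurable_const measurable_norm).inter
      (measurableSet_lt measurable_norm measurable_const)
  calc ∫⁻ x in {x : E | r < ‖x‖}, ENNReal.ofReal (‖x‖ ^ (-s)) ∂volume
      ≤ ∫⁻ x in ⋃ k, A k, ENNReal.ofReal (‖x‖ ^ (-s)) ∂volume := lintegral_mono_set hsub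
    _ ≤ ∑' (k:ℕ), ∫⁻ x in A k, ENNReal.ofReal (‖x‖ ^ (-s)) ∂volume := lintegral_iUnion_le _ _
    _ ≤ ∑' (k:ℕ), ENNReal.ofReal (((2:ℝ) ^ (k:ℝ) * r) ^ (-s)) * volume (A k) := by
        refine ENNReal.tsum_le_tsum fun k => ?_
        calc ∫⁻ x in A k, ENNReal.ofReal (‖x‖ ^ (-s)) ∂volume
            ≤ ∫⁻ _x in A k, ENNReal.ofReal (((2:ℝ) ^ (k:ℝ) * r) ^ (-s)) ∂volume := by
              refine setLIntegral_mono' (hmeas k) fun x hx => ENNReal.ofReal_le_ofReal ?_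
              have h1 : (0:ℝ) < (2:ℝ) ^ (k:ℝ) * r := by positivity
              rw [Real.rpow_neg (le_of_lt (h1.trans_le hx.1)), Real.rpow_neg h1.le]
              exact inv_anti₀ (Real.rpow_pos_of_pos h1 s)
                (Real.rpow_le_rpow h1.le hx.1 (le_of_lt ((Nat.cast_nonneg d).trans_lt hs)))
          _ = ENNReal.ofReal (((2:ℝ) ^ (k:ℝ) * r) ^ (-s)) * volume (A k) :=
              setLIntegral_const _ _
    _ ≤ ∑' (k:ℕ), ENNReal.ofReal (((2:ℝ) ^ (k:ℝ) * r) ^ (-s)) *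
          (ENNReal.ofReal (((2:ℝ) ^ ((k:ℝ)+1) * r) ^ d) * volume (ball (0:E) 1)) := by
        refine ENNReal.tsum_le_tsum fun k => ?_
        refine mul_le_mul_right ?_ _
        have hsub2 : A k ⊆ ball (0:E) ((2:ℝ) ^ ((k:ℝ)+1) * r) := fun x hx => by
          simpa [mem_ball_zero_iff] using hx.2
        refine (measure_mono hsub2).trans_eq ?_
        rw [Measure.addHaar_ball _ _ (by positivity), finrank_euclideanSpace_fin]
    _ = ∑' (k:ℕ), (ENNReal.ofReal ((2:ℝ) ^ (d:ℝ) * r ^ ((d:ℝ) - s)) *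
          ENNReal.ofReal ((2:ℝ) ^ ((d:ℝ) - s)) ^ k) * volume (ball (0:E) 1) := by
        congr 1; funext k
        rw [← ENNReal.ofReal_pow (by positivity), ← ENNReal.ofReal_mul (by positivity),
          ← mul_assoc, ← ENNReal.ofReal_mul (by positivity)]
        congr 2
        rw [← Real.rpow_natCast ((2:ℝ) ^ ((d:ℝ) - s)) k,
          ← Real.rpow_natCast ((2:ℝ) ^ ((k:ℝ)+1) * r) d]
        exact pow_identity d s r hr k
    _ = (ENNReal.ofReal ((2:ℝ) ^ (d:ℝ)) * volume (ball (0:E) 1)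
          * (1 - ENNReal.ofReal ((2:ℝ) ^ ((d:ℝ) - s)))⁻¹) * ENNReal.ofReal (r ^ ((d:ℝ) - s)) := by
        rw [ENNReal.tsum_mul_right, ENNReal.tsum_mul_left, ENNReal.tsum_geometric,
          ENNReal.ofReal_mul (by positivity)]
        ring

lemma lintegral_sq {X F : Type*} [MeasurableSpace X] [NormedAddCommGroup F]
    (μ : Measure X) (f : X → F) :
    ∫⁻ x, (‖f x‖₊ : ℝ≥0∞) ^ (2:ℝ) ∂μ = (eLpNorm f 2 μ) ^ (2:ℝ) := by
  rw [eLpNorm_eq_lintegral_rpow_enorm_toReal two_ne_zero ENNReal.ofNat_ne_top, ← ENNReal.rpow_mul]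
  norm_num [enorm_eq_nnnorm]

lemma holder_aux {X : Type*} [MeasurableSpace X] (μ : Measure X) {η : ℝ} (hη0 : 0 < η)
    (hη2 : η < 2) (F G : X → ℝ≥0∞) (hF : AEMeasurable F μ) (hG : AEMeasurable G μ) :
    ∫⁻ x, F x * G x ∂μ ≤
      (∫⁻ x, F x ^ (2/(2-η)) ∂μ) ^ ((2-η)/2) * (∫⁻ x, G x ^ (2/η) ∂μ) ^ (η/2) := by
  have h2η : 0 < 2 - η := by linarith
  have hpq : Real.HolderConjugate (2/(2-η)) (2/η) := by
    rw [Real.holderConjugate_iff]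
    constructor
    · rw [lt_div_iff₀ h2η]; linarith
    · rw [inv_div, inv_div]; ring
  simpa [one_div_div] using ENNReal.lintegral_mul_le_Lp_mul_Lq μ hpq hF hG

lemma final_alg (a b m kk α η β dd s : ℝ) (ha : 0 < a) (hb : 0 < b) (hm : 0 < m) (hk : 0 < kk)
    (hα : 0 < α) (hη : 0 < η) (h2η : 0 < 2 - η)
    (hβ : β = dd * η / (2*α)) (hs : s = 2*α*(2-η)/η) :
    a^(2-η) * (((b/a)^α⁻¹)^dd * m)^(η/2) + b^(2-η) * (kk * ((b/a)^α⁻¹)^(dd - s))^(η/2)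
      ≤ (m^(η/2) + kk^(η/2) + 1) * a^(2-η-β) * b^β := by
  have ht : 0 < b/a := div_pos hb ha
  have hαne : α ≠ 0 := ne_of_gt hα
  have hηne : η ≠ 0 := ne_of_gt hη
  rw [← Real.rpow_mul ht.le, ← Real.rpow_mul ht.le,
    Real.mul_rpow (Real.rpow_nonneg ht.le _) hm.le,
    Real.mul_rpow hk.le (Real.rpow_nonneg ht.le _),
    ← Real.rpow_mul ht.le, ← Real.rpow_mul ht.le]
  have hc1 : α⁻¹ * dd * (η/2) = β := by
    rw [hβ]
    rw [eq_div_iff (by positivity : (2:ℝ)*α ≠ 0)]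
    linear_combination (dd * η) * inv_mul_cancel₀ hαne
  have hc2 : α⁻¹ * (dd - s) * (η/2) = β - (2-η) := by
    rw [hβ, hs]
    have h1 := inv_mul_cancel₀ hαne
    have h2 := inv_mul_cancel₀ hηne
    linear_combination (-(2-η) * (η⁻¹*η)) * h1 + (-(2-η)) * h2
  rw [hc1, hc2]
  have t1 : a^(2-η) * ((b/a)^β * m^(η/2)) = m^(η/2) * (a^(2-η-β) * b^β) := by
    rw [Real.div_rpow hb.le ha.le, div_eq_mul_inv, ← Real.rpow_neg ha.le,
      show (2-η-β) = (2-η) + (-β) from by ring, Real.rpow_add ha]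
    ring
  have t2 : b^(2-η) * (kk^(η/2) * (b/a)^(β-(2-η))) = kk^(η/2) * (a^(2-η-β) * b^β) := by
    rw [Real.div_rpow hb.le ha.le,
      show (2-η-β) = -(β-(2-η)) from by ring, Real.rpow_neg ha.le,
      show b^(2-η) * (kk^(η/2) * (b^(β-(2-η)) / a^(β-(2-η))))
        = kk^(η/2) * ((b^(2-η) * b^(β-(2-η))) / a^(β-(2-η))) from by ring,
      ← Real.rpow_add hb, show (2-η) + (β-(2-η)) = β from by ring]
    ring
  rw [t1, t2]
  have hpos : 0 ≤ a^(2-η-β) * b^β := by positivity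
  nlinarith [Real.rpow_nonneg hm.le (η/2), Real.rpow_nonneg hk.le (η/2)]

/-- Weighted interpolation inequality: for `0 < α ≤ 1` and `0 < η < 4α/(d+2α)`,
`∫ |u|^{2−η} ≤ C ‖u‖_{L²}^{2−η−dη/(2α)} ‖|x|^α u‖_{L²}^{dη/(2α)}`. -/
theorem weighted_interpolation (d : ℕ) (hd : 1 ≤ d) (α η : ℝ) (hα0 : 0 < α) (hα1 : α ≤ 1)
    (hη0 : 0 < η) (hη : η < 4 * α / (d + 2 * α)) :
    ∃ C : ℝ, 0 < C ∧ ∀ u : EuclideanSpace ℝ (Fin d) → ℂ, Measurable u →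
      MemLp u 2 volume →
      MemLp (fun x => ‖x‖ ^ α * ‖u x‖) 2 volume →
      ∫ x, ‖u x‖ ^ (2 - η) ≤
        C * (eLpNorm u 2 volume).toReal ^ (2 - η - d * η / (2 * α)) *
          (eLpNorm (fun x => ‖x‖ ^ α * ‖u x‖) 2 volume).toReal ^ (d * η / (2 * α)) := by
  haveI : Nonempty (Fin d) := ⟨⟨0, hd⟩⟩
  haveI : Nontrivial (EuclideanSpace ℝ (Fin d)) := inferInstance
  set E := EuclideanSpace ℝ (Fin d)
  have hdpos : (0:ℝ) < (d:ℝ) := by exact_mod_cast hd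
  have hd2 : (0:ℝ) < (d:ℝ) + 2*α := by positivity
  have h4 : η * ((d:ℝ) + 2*α) < 4*α := (lt_div_iff₀ hd2).1 hη
  have hη2 : η < 2 := by nlinarith
  have h2η : 0 < 2 - η := by linarith
  set s : ℝ := 2*α*(2-η)/η with hs_def
  have hds : (d:ℝ) < s := by rw [hs_def, lt_div_iff₀ hη0]; nlinarith
  set β : ℝ := (d:ℝ) * η / (2*α) with hβ_def
  set mB := volume (ball (0:E) 1) with hmB
  have hmB0 : 0 < mB := measure_ball_pos _ _ one_pos
  have hmBtop : mB < ∞ := measure_ball_lt_top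
  set KE : ℝ≥0∞ := ENNReal.ofReal ((2:ℝ) ^ (d:ℝ)) * mB
    * (1 - ENNReal.ofReal ((2:ℝ) ^ ((d:ℝ)-s)))⁻¹ with hKE
  have hq1 : ENNReal.ofReal ((2:ℝ)^((d:ℝ)-s)) < 1 :=
    ENNReal.ofReal_lt_one.2 (Real.rpow_lt_one_of_one_lt_of_neg one_lt_two (by linarith))
  have hKEtop : KE < ∞ := by
    refine ENNReal.mul_lt_top (ENNReal.mul_lt_top ENNReal.ofReal_lt_top hmBtop) ?_
    rw [ENNReal.inv_lt_top]
    exact tsub_pos_iff_lt.2 hq1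
  have hKE0 : 0 < KE := by
    refine ENNReal.mul_pos (ENNReal.mul_pos ?_ hmB0.ne').ne' ?_
    · exact (ENNReal.ofReal_pos.2 (by positivity)).ne'
    · simp only [ne_eq, ENNReal.inv_eq_zero]
      exact (lt_of_le_of_lt (tsub_le_self) one_lt_top).ne
  set m := mB.toReal with hm_def
  set kk := KE.toReal with hkk_def
  have hm0 : 0 < m := ENNReal.toReal_pos hmB0.ne' hmBtop.ne
  have hkk0 : 0 < kk := ENNReal.toReal_pos hKE0.ne' hKEtop.ne
  refine ⟨m^(η/2) + kk^(η/2) + 1, by positivity, fun u hu hu2 hw2 => ?_⟩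
  set w : E → ℝ := fun x => ‖x‖ ^ α * ‖u x‖ with hw_def
  set A := eLpNorm u 2 volume with hA_def
  set B := eLpNorm w 2 volume with hB_def
  have hAtop : A < ∞ := hu2.2
  have hBtop : B < ∞ := hw2.2
  set f : E → ℝ≥0∞ := fun x => ENNReal.ofReal (‖u x‖ ^ (2-η)) with hf_def
  set ff : E → ℝ≥0∞ := fun x => ((‖u x‖₊ : ℝ≥0∞)) ^ ((2:ℝ)-η) with hff_def
  have hffeq : f = ff := by
    funext x
    simp only [hf_def, hff_def]
    rw [← enorm_eq_nnnorm, ← ofReal_norm, ENNReal.ofReal_rpow_of_nonneg (norm_nonneg _) h2η.le]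
  have hIeq : ∫ x, ‖u x‖ ^ (2-η) = (∫⁻ x, f x ∂volume).toReal := by
    exact integral_eq_lintegral_of_nonneg_ae (Filter.Eventually.of_forall fun x => by positivity)
      ((by fun_prop : Measurable fun x => ‖u x‖ ^ (2-η)).aestronglyMeasurable)
  rw [hIeq]
  -- main claim
  have hmain : ∫⁻ x, f x ∂volume
      ≤ ENNReal.ofReal ((m^(η/2) + kk^(η/2) + 1) * A.toReal ^ (2-η-β) * B.toReal ^ β) := by
    by_cases h0 : u =ᵐ[volume] 0
    · have hz : f =ᵐ[volume] 0 := by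
        filter_upwards [h0] with x hx
        simp [hf_def, show u x = 0 from hx, Real.zero_rpow h2η.ne']
      rw [lintegral_congr_ae hz]
      simp
    have hA0 : A ≠ 0 := fun h => h0 ((eLpNorm_eq_zero_iff hu2.1 two_ne_zero).1 h)
    have ha : 0 < A.toReal := ENNReal.toReal_pos hA0 hAtop.ne
    have hB0 : B ≠ 0 := by
      intro h
      refine h0 ?_
      have hw0 : w =ᵐ[volume] 0 := (eLpNorm_eq_zero_iff hw2.1 two_ne_zero).1 h
      have hsing : volume ({(0:E)} : Set E) = 0 := measure_singleton 0
      filter_upwards [hw0, measure_eq_zero_iff_ae_notMem.1 hsing] with x hx1 hx2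
      have hxnorm : (0:ℝ) < ‖x‖ := by
        simpa [norm_pos_iff] using hx2
      have hx1' : ‖x‖ ^ α * ‖u x‖ = 0 := hx1
      have hpow : (0:ℝ) < ‖x‖ ^ α := Real.rpow_pos_of_pos hxnorm α
      have := (mul_eq_zero.1 hx1').resolve_left hpow.ne'
      simpa using this
    have hb : 0 < B.toReal := ENNReal.toReal_pos hB0 hBtop.ne
    set a := A.toReal with ha_def
    set b := B.toReal with hb_def
    set r : ℝ := (b/a) ^ α⁻¹ with hr_def
    have hrpos : 0 < r := Real.rpow_pos_of_pos (div_pos hb ha) _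
    set S : Set E := {x : E | r < ‖x‖} with hS_def
    have hSmeas : MeasurableSet S := measurableSet_lt measurable_const measurable_norm
    have hScball : Sᶜ = closedBall (0:E) r := by
      ext x; simp [hS_def, mem_closedBall_zero_iff, not_lt]
    have hsplit : ∫⁻ x, f x ∂volume = (∫⁻ x in S, f x ∂volume) + ∫⁻ x in Sᶜ, f x ∂volume :=
      (lintegral_add_compl f hSmeas).symm
    -- inner bound
    have hb1 : ∫⁻ x in Sᶜ, f x ∂volume
        ≤ A ^ ((2:ℝ)-η) * (ENNReal.ofReal (r ^ (d:ℝ)) * mB) ^ (η/2) := by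
      set G : E → ℝ≥0∞ := Sᶜ.indicator 1 with hG_def
      have hprod : ∀ x, Sᶜ.indicator ff x = ff x * G x := fun x => by
        by_cases hx : x ∈ Sᶜ <;> simp [hG_def, hx]
      calc ∫⁻ x in Sᶜ, f x ∂volume = ∫⁻ x in Sᶜ, ff x ∂volume := by rw [hffeq]
        _ = ∫⁻ x, Sᶜ.indicator ff x ∂volume := (lintegral_indicator hSmeas.compl ff).symm
        _ = ∫⁻ x, ff x * G x ∂volume := lintegral_congr hprod
        _ ≤ (∫⁻ x, ff x ^ (2/(2-η)) ∂volume) ^ ((2-η)/2)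
              * (∫⁻ x, G x ^ (2/η) ∂volume) ^ (η/2) :=
            holder_aux _ hη0 hη2 _ _ (by fun_prop) ((measurable_one.indicator hSmeas.compl).aemeasurable)
        _ = A ^ ((2:ℝ)-η) * (ENNReal.ofReal (r ^ (d:ℝ)) * mB) ^ (η/2) := by
            congr 1
            · have h1 : ∀ x, ff x ^ (2/(2-η)) = ((‖u x‖₊ : ℝ≥0∞)) ^ (2:ℝ) := fun x => by
                rw [hff_def, ← ENNReal.rpow_mul]
                congr 1
                field_simp
              rw [lintegral_congr h1, lintegral_sq volume u, ← hA_def, ← ENNReal.rpow_mul]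
              congr 1
              ring
            · have h2 : ∀ x, G x ^ (2/η) = G x := fun x => by
                by_cases hx : x ∈ Sᶜ <;>
                  simp [hG_def, hx, ENNReal.zero_rpow_of_pos (by positivity : (0:ℝ) < 2/η)]
              congr 1
              rw [lintegral_congr h2, hG_def, lintegral_indicator_one hSmeas.compl, hScball,
                Measure.addHaar_closedBall _ _ hrpos.le, finrank_euclideanSpace_fin, ← hmB,
                ← Real.rpow_natCast r d]
    -- outer bound
    have hb2 : ∫⁻ x in S, f x ∂volume
        ≤ B ^ ((2:ℝ)-η) * (KE * ENNReal.ofReal (r ^ ((d:ℝ)-s))) ^ (η/2) := by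
      set F : E → ℝ≥0∞ := fun x => ENNReal.ofReal (w x) ^ ((2:ℝ)-η) with hF_def
      set G : E → ℝ≥0∞ := S.indicator (fun x => ENNReal.ofReal (‖x‖ ^ (-α)) ^ ((2:ℝ)-η))
        with hG_def
      have hprod : ∀ x, S.indicator ff x = F x * G x := fun x => by
        by_cases hx : x ∈ S
        · have hx0 : (0:ℝ) < ‖x‖ := hrpos.trans hx
          simp only [indicator_of_mem hx, hG_def, hF_def, hff_def]
          rw [← ENNReal.mul_rpow_of_nonneg _ _ h2η.le,
            ← ENNReal.ofReal_mul (by positivity), ← enorm_eq_nnnorm, ← ofReal_norm]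
          congr 2
          rw [hw_def]
          have : ‖x‖ ^ α * ‖u x‖ * ‖x‖ ^ (-α) = (‖x‖ ^ α * ‖x‖ ^ (-α)) * ‖u x‖ := by ring
          rw [this, ← Real.rpow_add hx0, add_neg_cancel, Real.rpow_zero, one_mul]
        · simp [indicator_of_notMem hx, hG_def]
      have hGq : ∀ x, G x ^ (2/η) = S.indicator (fun y : E => ENNReal.ofReal (‖y‖ ^ (-s))) x :=
        fun x => by
          by_cases hx : x ∈ S
          · simp only [hG_def, indicator_of_mem hx]
            rw [← ENNReal.rpow_mul,
              ENNReal.ofReal_rpow_of_nonneg (Real.rpow_nonneg (norm_nonneg _) _)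
                (by positivity)]
            congr 1
            rw [← Real.rpow_mul (norm_nonneg _)]
            congr 1
            rw [hs_def]
            ring
          · simp [hG_def, indicator_of_notMem hx,
              ENNReal.zero_rpow_of_pos (by positivity : (0:ℝ) < 2/η)]
      calc ∫⁻ x in S, f x ∂volume = ∫⁻ x in S, ff x ∂volume := by rw [hffeq]
        _ = ∫⁻ x, S.indicator ff x ∂volume := (lintegral_indicator hSmeas ff).symm
        _ = ∫⁻ x, F x * G x ∂volume := lintegral_congr hprod
        _ ≤ (∫⁻ x, F x ^ (2/(2-η)) ∂volume) ^ ((2-η)/2)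
              * (∫⁻ x, G x ^ (2/η) ∂volume) ^ (η/2) :=
            holder_aux _ hη0 hη2 _ _ (by fun_prop)
              ((Measurable.indicator (by fun_prop) hSmeas).aemeasurable)
        _ ≤ B ^ ((2:ℝ)-η) * (KE * ENNReal.ofReal (r ^ ((d:ℝ)-s))) ^ (η/2) := by
            refine mul_le_mul ?_ ?_ zero_le zero_le
            · have h1 : ∀ x, F x ^ (2/(2-η)) = ((‖w x‖₊ : ℝ≥0∞)) ^ (2:ℝ) := fun x => by
                rw [hF_def, ← ENNReal.rpow_mul, ← enorm_eq_nnnorm, ← ofReal_norm,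
                  Real.norm_of_nonneg (by rw [hw_def]; positivity)]
                congr 1
                field_simp
              rw [lintegral_congr h1, lintegral_sq volume w, ← hB_def, ← ENNReal.rpow_mul]
              apply le_of_eq
              congr 1
              ring
            · refine ENNReal.rpow_le_rpow ?_ (by positivity)
              rw [lintegral_congr hGq, lintegral_indicator hSmeas]
              exact tail_bound d hd s hds r hrpos
    -- combine
    rw [hsplit]
    have hAof : A = ENNReal.ofReal a := (ENNReal.ofReal_toReal hAtop.ne).symm
    have hBof : B = ENNReal.ofReal b := (ENNReal.ofReal_toReal hBtop.ne).symm
    have hmof : mB = ENNReal.ofReal m := (ENNReal.ofReal_toReal hmBtop.ne).symm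
    have hkof : KE = ENNReal.ofReal kk := (ENNReal.ofReal_toReal hKEtop.ne).symm
    calc (∫⁻ x in S, f x ∂volume) + ∫⁻ x in Sᶜ, f x ∂volume
        ≤ B ^ ((2:ℝ)-η) * (KE * ENNReal.ofReal (r ^ ((d:ℝ)-s))) ^ (η/2)
            + A ^ ((2:ℝ)-η) * (ENNReal.ofReal (r ^ (d:ℝ)) * mB) ^ (η/2) :=
          add_le_add hb2 hb1
      _ = ENNReal.ofReal (b ^ (2-η) * (kk * r ^ ((d:ℝ)-s)) ^ (η/2)
            + a ^ (2-η) * (r ^ (d:ℝ) * m) ^ (η/2)) := by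
          rw [hAof, hBof, hmof, hkof,
            ENNReal.ofReal_rpow_of_pos hb, ENNReal.ofReal_rpow_of_pos ha,
            ← ENNReal.ofReal_mul (by positivity), ← ENNReal.ofReal_mul (by positivity),
            ENNReal.ofReal_rpow_of_pos (by positivity), ENNReal.ofReal_rpow_of_pos (by positivity),
            ← ENNReal.ofReal_mul (by positivity), ← ENNReal.ofReal_mul (by positivity),
            ← ENNReal.ofReal_add (by positivity) (by positivity)]
      _ ≤ ENNReal.ofReal ((m^(η/2) + kk^(η/2) + 1) * a ^ (2-η-β) * b ^ β) := by
          refine ENNReal.ofReal_le_ofReal ?_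
          have := final_alg a b m kk α η β (d:ℝ) s ha hb hm0 hkk0 hα0 hη0 h2η hβ_def hs_def
          rw [← hr_def] at this
          linarith [this]
  calc (∫⁻ x, f x ∂volume).toReal
      ≤ (ENNReal.ofReal ((m^(η/2) + kk^(η/2) + 1) * A.toReal ^ (2-η-β) * B.toReal ^ β)).toReal :=
        ENNReal.toReal_mono ENNReal.ofReal_ne_top hmain
    _ = (m^(η/2) + kk^(η/2) + 1) * A.toReal ^ (2-η-β) * B.toReal ^ β :=
        ENNReal.toReal_ofReal (by positivity)
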